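/- arXiv:1304.3481 — 2 statements merged into one kernel-verified Lean document; each statement's English description precedes it below -/
import Mathlib

section
/- Let P̃(a,Q,tr,tc) = a⁴(Q^{−4} + tr²tc⁴ + tr²tc⁶ + Q⁴tr⁴tc⁸) + a⁶(Q^{−2}tr³tc⁵ + Q^{−2}tr³tc⁷ + Q²tr⁵tc⁹ + Q²tr⁵tc¹¹) + a⁸tr⁶tc¹², an element of ℤ[a^{±1}, Q^{±1}, tr^{±1}, tc^{±1}]. Then the specialization Q := q, tr := t, tc := 1 satisfies P̃(a,q,t,1) = (a²q^{−2} + a²q²t² + a⁴t³)² in ℤ[a^{±1}, q^{±1}, t^{±1}]. -/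
/-- The Laurent monomial `a^i * q^j * tr^k * tc^l` (with variables invertible). -/
noncomputable def monoE {R : Type*} [CommRing R] (a q tr tc : Rˣ) (i j k l : ℤ) : R :=
  ((a ^ i * q ^ j * tr ^ k * tc ^ l : Rˣ) : R)

/-- The Laurent monomial `a^i * q^j * t^k`. -/
noncomputable def triE {R : Type*} [CommRing R] (a q t : Rˣ) (i j k : ℤ) : R :=
  ((a ^ i * q ^ j * t ^ k : Rˣ) : R)

/-- Tilde-version of the `S²`-colored homology of the trefoil. -/
noncomputable def PtildeTref {R : Type*} [CommRing R] (a Q tr tc : Rˣ) : R :=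
  monoE a Q tr tc 4 (-4) 0 0 +
    monoE a Q tr tc 4 0 2 4 +
    monoE a Q tr tc 4 0 2 6 +
    monoE a Q tr tc 4 4 4 8 +
    monoE a Q tr tc 6 (-2) 3 5 +
    monoE a Q tr tc 6 (-2) 3 7 +
    monoE a Q tr tc 6 2 5 9 +
    monoE a Q tr tc 6 2 5 11 +
    monoE a Q tr tc 8 0 6 12

/-- Refined exponential growth for the trefoil, `r = 2`: the specialization
`Q := q`, `tr := t`, `tc := 1` is the square of the uncolored superpolynomial. -/
theorem stmt_9 {R : Type*} [CommRing R] (a q t : Rˣ) :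
    PtildeTref a q t 1 =
      (triE a q t 2 (-2) 0 + triE a q t 2 2 2 + triE a q t 4 0 3) ^ 2 := by
  have h : (q : R) * ((q⁻¹ : Rˣ) : R) = 1 := by
    rw [← Units.val_mul, mul_inv_cancel, Units.val_one]
  simp only [PtildeTref, monoE, triE, one_zpow, mul_one, zpow_zero,
    show (-4:ℤ) = -(4:ℕ) from rfl, show (-2:ℤ) = -(2:ℕ) from rfl, zpow_neg,
    show (2:ℤ)=((2:ℕ):ℤ) from rfl, show (3:ℤ)=((3:ℕ):ℤ) from rfl,
    show (4:ℤ)=((4:ℕ):ℤ) from rfl, show (5:ℤ)=((5:ℕ):ℤ) from rfl,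
    show (6:ℤ)=((6:ℕ):ℤ) from rfl, show (8:ℤ)=((8:ℕ):ℤ) from rfl,
    zpow_natCast, ← inv_pow]
  simp only [Units.val_mul, Units.val_pow_eq_pow_val, Units.val_one, one_pow]
  linear_combination (-2 * (a:R)^4 * (t:R)^2 * ((q:R) * ((q⁻¹:Rˣ):R) + 1)) * h
end

section
/- Let P̃(a,Q,tr,tc) = a⁴tr⁴tc⁸ + a²(Q^{−2}tr·tc + Q^{−2}tr·tc³ + tr²tc² + tr²tc⁴ + Q²tr³tc⁵ + Q²tr³tc⁷) + (Q^{−4}tr^{−2}tc^{−4} + Q^{−2}tr^{−1}tc^{−3} + Q^{−2}tr^{−1}tc^{−1} + tc^{−2} + 3 + tc² + Q²tr·tc + Q²tr·tc³ + Q⁴tr²tc⁴) + a^{−2}(Q^{−2}tr^{−3}tc^{−7} + Q^{−2}tr^{−3}tc^{−5} + tr^{−2}tc^{−4} + tr^{−2}tc^{−2} + Q²tr^{−1}tc^{−3} + Q²tr^{−1}tc^{−1}) + a^{−4}tr^{−4}tc^{−8}, an element of ℤ[a^{±1}, Q^{±1}, tr^{±1}, tc^{±1}]. Then the specialization Q :=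 q, tr := t, tc := 1 satisfies P̃(a,q,t,1) = (a²t² + q^{−2}t^{−1} + 1 + q²t + a^{−2}t^{−2})² in ℤ[a^{±1}, q^{±1}, t^{±1}]. -/
/-- The Laurent monomial `a^i * q^j * tr^k * tc^l` (with variables invertible). -/
noncomputable def monoH {R : Type*} [CommRing R] (a q tr tc : Rˣ) (i j k l : ℤ) : R :=
  ((a ^ i * q ^ j * tr ^ k * tc ^ l : Rˣ) : R)

/-- The Laurent monomial `a^i * q^j * t^k`. -/
noncomputable def triH {R : Type*} [CommRing R] (a q t : Rˣ) (i j k : ℤ) : R :=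
  ((a ^ i * q ^ j * t ^ k : Rˣ) : R)

/-- Tilde-version of the quadruply-graded `S²`-colored homology of the figure-eight knot. -/
noncomputable def PtildeFigEight {R : Type*} [CommRing R] (a Q tr tc : Rˣ) : R :=
  monoH a Q tr tc 4 0 4 8 +
    monoH a Q tr tc 2 (-2) 1 1 +
    monoH a Q tr tc 2 (-2) 1 3 +
    monoH a Q tr tc 2 0 2 2 +
    monoH a Q tr tc 2 0 2 4 +
    monoH a Q tr tc 2 2 3 5 +
    monoH a Q tr tc 2 2 3 7 +
    monoH a Q tr tc 0 (-4) (-2) (-4) +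
    monoH a Q tr tc 0 (-2) (-1) (-3) +
    monoH a Q tr tc 0 (-2) (-1) (-1) +
    monoH a Q tr tc 0 0 0 (-2) +
    3 * monoH a Q tr tc 0 0 0 0 +
    monoH a Q tr tc 0 0 0 2 +
    monoH a Q tr tc 0 2 1 1 +
    monoH a Q tr tc 0 2 1 3 +
    monoH a Q tr tc 0 4 2 4 +
    monoH a Q tr tc (-2) (-2) (-3) (-7) +
    monoH a Q tr tc (-2) (-2) (-3) (-5) +
    monoH a Q tr tc (-2) 0 (-2) (-4) +
    monoH a Q tr tc (-2) 0 (-2) (-2) +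
    monoH a Q tr tc (-2) 2 (-1) (-3) +
    monoH a Q tr tc (-2) 2 (-1) (-1) +
    monoH a Q tr tc (-4) 0 (-4) (-8)

lemma unit_shift {R : Type*} [CommRing R] (a q t : Rˣ) (A B C i j k : ℤ) (m n p : ℕ)
    (hm : (m : ℤ) = A + i) (hn : (n : ℤ) = B + j) (hp : (p : ℤ) = C + k) :
    ((a ^ A * q ^ B * t ^ C : Rˣ) : R) * ((a ^ i * q ^ j * t ^ k : Rˣ) : R)
      = (a : R) ^ m * (q : R) ^ n * (t : R) ^ p := by
  rw [← Units.val_mul]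
  have h : (a ^ A * q ^ B * t ^ C) * (a ^ i * q ^ j * t ^ k)
      = a ^ (m : ℤ) * q ^ (n : ℤ) * t ^ (p : ℤ) := by
    rw [hm, hn, hp, zpow_add, zpow_add, zpow_add]
    simp [mul_assoc, mul_comm, mul_left_comm]
  rw [h]
  simp [zpow_natCast, Units.val_mul, Units.val_pow_eq_pow_val]

lemma keyM {R : Type*} [CommRing R] (a q t : Rˣ) (i j k l : ℤ) (m n p : ℕ)
    (hm : (m : ℤ) = 4 + i) (hn : (n : ℤ) = 4 + j) (hp : (p : ℤ) = 8 + k) :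
    ((a ^ (4:ℤ) * q ^ (4:ℤ) * t ^ (8:ℤ) : Rˣ) : R) * monoH a q t 1 i j k l
      = (a : R) ^ m * (q : R) ^ n * (t : R) ^ p := by
  unfold monoH
  rw [show ((a ^ i * q ^ j * t ^ k * (1:Rˣ) ^ l : Rˣ) : R)
      = ((a ^ i * q ^ j * t ^ k : Rˣ) : R) by rw [one_zpow, mul_one]]
  exact unit_shift a q t 4 4 8 i j k m n p hm hn hp

lemma keyT {R : Type*} [CommRing R] (a q t : Rˣ) (i j k : ℤ) (m n p : ℕ)
    (hm : (m : ℤ) = 2 + i) (hn : (n : ℤ) = 2 + j) (hp : (p : ℤ) = 4 + k) :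
    ((a ^ (2:ℤ) * q ^ (2:ℤ) * t ^ (4:ℤ) : Rˣ) : R) * triH a q t i j k
      = (a : R) ^ m * (q : R) ^ n * (t : R) ^ p := by
  unfold triH
  exact unit_shift a q t 2 2 4 i j k m n p hm hn hp

lemma sq_pull {R : Type*} [CommRing R] (a q t : Rˣ) (x : R) :
    ((a ^ (4:ℤ) * q ^ (4:ℤ) * t ^ (8:ℤ) : Rˣ) : R) * x ^ 2
      = (((a ^ (2:ℤ) * q ^ (2:ℤ) * t ^ (4:ℤ) : Rˣ) : R) * x) ^ 2 := by
  have h : (a ^ (4:ℤ) * q ^ (4:ℤ) * t ^ (8:ℤ) : Rˣ)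
      = (a ^ (2:ℤ) * q ^ (2:ℤ) * t ^ (4:ℤ)) * (a ^ (2:ℤ) * q ^ (2:ℤ) * t ^ (4:ℤ)) := by
    have h2 : ∀ u : Rˣ, ∀ n : ℤ, u ^ (n + n) = u ^ n * u ^ n := fun u n => zpow_add u n n
    rw [show (8:ℤ) = 4 + 4 from rfl, show (4:ℤ) = 2 + 2 from rfl, h2, h2, h2]
    simp [mul_assoc, mul_comm, mul_left_comm]
  rw [h, Units.val_mul]
  ring

/-- Refined exponential growth for the figure-eight knot, `r = 2`. -/
theorem stmt_13 {R : Type*} [CommRing R] (a q t : Rˣ) :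
    PtildeFigEight a q t 1 =
      (triH a q t 2 0 2 + triH a q t 0 (-2) (-1) + 1 + triH a q t 0 2 1 +
          triH a q t (-2) 0 (-2)) ^ 2 := by
  have hc : ∀ x y : R,
      ((a ^ (4:ℤ) * q ^ (4:ℤ) * t ^ (8:ℤ) : Rˣ) : R) * x
        = ((a ^ (4:ℤ) * q ^ (4:ℤ) * t ^ (8:ℤ) : Rˣ) : R) * y → x = y := by
    intro x y h
    have h2 := congrArg
      (fun z => (((a ^ (4:ℤ) * q ^ (4:ℤ) * t ^ (8:ℤ))⁻¹ : Rˣ) : R) * z) h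
    simpa [← mul_assoc, ← Units.val_mul] using h2
  apply hc
  rw [sq_pull, PtildeFigEight]
  rw [mul_add, mul_add, mul_add, mul_add, mul_add, mul_add, mul_add, mul_add,
    mul_add, mul_add, mul_add, mul_add, mul_add, mul_add, mul_add, mul_add,
    mul_add, mul_add, mul_add, mul_add, mul_add, mul_add,
    mul_add, mul_add, mul_add, mul_add, mul_one]
  rw [keyM a q t 4 0 4 8 8 4 12 (by norm_num) (by norm_num) (by norm_num),
    keyM a q t 2 (-2) 1 1 6 2 9 (by norm_num) (by norm_num) (by norm_num),
    keyM a q t 2 (-2) 1 3 6 2 9 (by norm_num) (by norm_num) (by norm_num),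
    keyM a q t 2 0 2 2 6 4 10 (by norm_num) (by norm_num) (by norm_num),
    keyM a q t 2 0 2 4 6 4 10 (by norm_num) (by norm_num) (by norm_num),
    keyM a q t 2 2 3 5 6 6 11 (by norm_num) (by norm_num) (by norm_num),
    keyM a q t 2 2 3 7 6 6 11 (by norm_num) (by norm_num) (by norm_num),
    keyM a q t 0 (-4) (-2) (-4) 4 0 6 (by norm_num) (by norm_num) (by norm_num),
    keyM a q t 0 (-2) (-1) (-3) 4 2 7 (by norm_num) (by norm_num) (by norm_num),
    keyM a q t 0 (-2) (-1) (-1) 4 2 7 (by norm_num) (by norm_num) (by norm_num),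
    keyM a q t 0 0 0 (-2) 4 4 8 (by norm_num) (by norm_num) (by norm_num),
    show ((a ^ (4:ℤ) * q ^ (4:ℤ) * t ^ (8:ℤ) : Rˣ) : R) * (3 * monoH a q t 1 0 0 0 0)
      = 3 * (((a ^ (4:ℤ) * q ^ (4:ℤ) * t ^ (8:ℤ) : Rˣ) : R) * monoH a q t 1 0 0 0 0) by ring,
    keyM a q t 0 0 0 0 4 4 8 (by norm_num) (by norm_num) (by norm_num),
    keyM a q t 0 0 0 2 4 4 8 (by norm_num) (by norm_num) (by norm_num),
    keyM a q t 0 2 1 1 4 6 9 (by norm_num) (by norm_num) (by norm_num),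
    keyM a q t 0 2 1 3 4 6 9 (by norm_num) (by norm_num) (by norm_num),
    keyM a q t 0 4 2 4 4 8 10 (by norm_num) (by norm_num) (by norm_num),
    keyM a q t (-2) (-2) (-3) (-7) 2 2 5 (by norm_num) (by norm_num) (by norm_num),
    keyM a q t (-2) (-2) (-3) (-5) 2 2 5 (by norm_num) (by norm_num) (by norm_num),
    keyM a q t (-2) 0 (-2) (-4) 2 4 6 (by norm_num) (by norm_num) (by norm_num),
    keyM a q t (-2) 0 (-2) (-2) 2 4 6 (by norm_num) (by norm_num) (by norm_num),
    keyM a q t (-2) 2 (-1) (-3) 2 6 7 (by norm_num) (by norm_num) (by norm_num),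
    keyM a q t (-2) 2 (-1) (-1) 2 6 7 (by norm_num) (by norm_num) (by norm_num),
    keyM a q t (-4) 0 (-4) (-8) 0 4 4 (by norm_num) (by norm_num) (by norm_num)]
  rw [keyT a q t 2 0 2 4 2 6 (by norm_num) (by norm_num) (by norm_num),
    keyT a q t 0 (-2) (-1) 2 0 3 (by norm_num) (by norm_num) (by norm_num),
    keyT a q t 0 2 1 2 4 5 (by norm_num) (by norm_num) (by norm_num),
    keyT a q t (-2) 0 (-2) 0 2 2 (by norm_num) (by norm_num) (by norm_num),
    show ((a ^ (2:ℤ) * q ^ (2:ℤ) * t ^ (4:ℤ) : Rˣ) : R)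
      = (a:R)^2 * (q:R)^2 * (t:R)^4 by
        simpa using unit_shift a q t 2 2 4 0 0 0 2 2 4 (by norm_num) (by norm_num) (by norm_num)]
  ring
end
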